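/- Let d ≥ 1, let y₁, …, y_n ∈ ℝ^d (n ≥ 1), and let G(z) = min_{1 ≤ i ≤ n} ‖z − y_i‖². Define G*(x) = sup_z (⟨x,z⟩ − G(z)) and G**(z) = sup_x (⟨x,z⟩ − G*(x)). If y = Σᵢ cᵢ yᵢ with cᵢ ≥ 0 for all i and Σᵢ cᵢ = 1, then G**(z) ≤ ‖z − y‖² for all z ∈ ℝ^d. -/

import Mathlib

open scoped RealInnerProductSpace
noncomputable section

/-- Legendre transform: `f*(x) = sup_y (⟨x,y⟩ − f(y))`. -/
def conj {d : ℕ} (f : EuclideanSpace ℝ (Fin d) → ℝ)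
    (x : EuclideanSpace ℝ (Fin d)) : ℝ :=
  ⨆ y : EuclideanSpace ℝ (Fin d), (⟪x, y⟫ - f y)

lemma key_ineq {d : ℕ} (x w : EuclideanSpace ℝ (Fin d)) :
    ⟪x, w⟫ - ‖w‖ ^ 2 ≤ ‖x‖ ^ 2 / 4 := by
  have h := real_inner_le_norm x w
  nlinarith [sq_nonneg (‖x‖ / 2 - ‖w‖)]

theorem stmt16 (d n : ℕ) (hd : 1 ≤ d) (hn : 1 ≤ n)
    (y : Fin n → EuclideanSpace ℝ (Fin d)) (c : Fin n → ℝ)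
    (hc : ∀ i, 0 ≤ c i) (hsum : ∑ i, c i = 1)
    (ybar : EuclideanSpace ℝ (Fin d)) (hybar : ybar = ∑ i, c i • y i) :
    ∀ z : EuclideanSpace ℝ (Fin d),
      conj (conj (fun z' => ⨅ i : Fin n, ‖z' - y i‖ ^ 2)) z ≤ ‖z - ybar‖ ^ 2 := by
  have hn' : Nonempty (Fin n) := ⟨⟨0, hn⟩⟩
  set G : EuclideanSpace ℝ (Fin d) → ℝ := fun z' => ⨅ i : Fin n, ‖z' - y i‖ ^ 2 with hG
  -- each function z' ↦ ⟪x,z'⟫ - G z' is bounded above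
  have hbdd : ∀ x : EuclideanSpace ℝ (Fin d),
      BddAbove (Set.range fun z' => ⟪x, z'⟫ - G z') := by
    intro x
    refine ⟨Finset.univ.sup' Finset.univ_nonempty (fun i => ⟪x, y i⟫ + ‖x‖ ^ 2 / 4), ?_⟩
    rintro _ ⟨z', rfl⟩
    obtain ⟨j, hj⟩ := Finite.exists_min (fun i : Fin n => ‖z' - y i‖ ^ 2)
    have hGz : ‖z' - y j‖ ^ 2 ≤ G z' := le_ciInf hj
    have hxz : ⟪x, z'⟫ = ⟪x, z' - y j⟫ + ⟪x, y j⟫ := by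
      rw [← inner_add_right]; rw [sub_add_cancel]
    have h1 : ⟪x, z'⟫ - G z' ≤ ⟪x, y j⟫ + ‖x‖ ^ 2 / 4 := by
      have := key_ineq x (z' - y j)
      rw [hxz]; linarith
    exact h1.trans (Finset.le_sup' (fun i => ⟪x, y i⟫ + ‖x‖ ^ 2 / 4) (Finset.mem_univ j))
  -- lower bound for conj G
  have hlb : ∀ (x : EuclideanSpace ℝ (Fin d)) (i : Fin n),
      ⟪x, y i⟫ + ‖x‖ ^ 2 / 4 ≤ conj G x := by
    intro x i
    have hle := le_ciSup (hbdd x) (y i + (1/2 : ℝ) • x)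
    have hGle : G (y i + (1/2 : ℝ) • x) ≤ ‖x‖ ^ 2 / 4 := by
      have h0 : G (y i + (1/2 : ℝ) • x) ≤ ‖(y i + (1/2 : ℝ) • x) - y i‖ ^ 2 :=
        ciInf_le ⟨0, by rintro _ ⟨k, rfl⟩; positivity⟩ i
      have : (y i + (1/2 : ℝ) • x) - y i = (1/2 : ℝ) • x := by abel
      rw [this, norm_smul, Real.norm_eq_abs, abs_of_pos (by norm_num : (0:ℝ) < 1/2)] at h0
      calc G (y i + (1/2 : ℝ) • x) ≤ (1/2 * ‖x‖) ^ 2 := h0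
        _ = ‖x‖ ^ 2 / 4 := by ring
    have hxin : ⟪x, y i + (1/2 : ℝ) • x⟫ = ⟪x, y i⟫ + ‖x‖ ^ 2 / 2 := by
      rw [inner_add_right, real_inner_smul_right, real_inner_self_eq_norm_sq]; ring
    rw [hxin] at hle
    unfold conj
    linarith
  -- main bound
  intro z
  apply ciSup_le
  intro x
  have h1 : ⟪x, ybar⟫ + ‖x‖ ^ 2 / 4 ≤ conj G x := by
    have hsum1 : ⟪x, ybar⟫ + ‖x‖ ^ 2 / 4
        = ∑ i, c i * (⟪x, y i⟫ + ‖x‖ ^ 2 / 4) := by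
      rw [hybar, inner_sum]
      simp only [real_inner_smul_right, mul_add]
      rw [Finset.sum_add_distrib, ← Finset.sum_mul, hsum]
      ring
    have hsum2 : ∑ i, c i * (⟪x, y i⟫ + ‖x‖ ^ 2 / 4) ≤ ∑ i, c i * conj G x :=
      Finset.sum_le_sum fun i _ => mul_le_mul_of_nonneg_left (hlb x i) (hc i)
    rw [hsum1]
    calc ∑ i, c i * (⟪x, y i⟫ + ‖x‖ ^ 2 / 4) ≤ ∑ i, c i * conj G x := hsum2
      _ = conj G x := by rw [← Finset.sum_mul, hsum, one_mul]
  have h2 : ⟪x, z⟫ = ⟪x, z - ybar⟫ + ⟪x, ybar⟫ := by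
    rw [← inner_add_right, sub_add_cancel]
  have h3 := key_ineq x (z - ybar)
  have h4 : ⟪z, x⟫ = ⟪x, z⟫ := real_inner_comm x z
  linarith
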